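/- For all integers n ≥ m ≥ 1, ∑_{k=m}^n (−1)^{n−k}·C(k−1,m−1)·w(n,k) = w(n,m), where w(n,k) = (1/k)·C(n−1,k−1)·C(n+k,k−1). -/

import Mathlib

open Finset Nat

def Fq (n m k : ℕ) : ℚ :=
  (-1 : ℚ) ^ (n - k) * ((k - 1).choose (m - 1) : ℚ) *
    (((n - 1).choose (k - 1) : ℚ) * ((n + k).choose (k - 1) : ℚ) / (k : ℚ))

def Wq (n m : ℕ) : ℚ :=
  ((n - 1).choose (m - 1) : ℚ) * ((n + m).choose (m - 1) : ℚ) / (m : ℚ)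

def Gq (n m k : ℕ) : ℚ := (k : ℚ) * ((k : ℚ) - (m : ℚ)) * Fq n m k

lemma L1 (N r s : ℕ) (h : r + s = N) :
    (N.choose (r+1) : ℚ) = N.choose r * s / (r+1) := by
  have h2 := Nat.choose_succ_right_eq N r
  have h3 : N - r = s := by omega
  rw [h3] at h2
  have : ((N.choose (r+1) * (r+1) : ℕ) : ℚ) = ((N.choose r * s : ℕ) : ℚ) := by
    exact_mod_cast h2
  push_cast at this
  field_simp
  linarith [this]

lemma L2 (N r : ℕ) : ((N+1).choose (r+1) : ℚ) = (N+1) * N.choose r / (r+1) := by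
  have h2 := Nat.add_one_mul_choose_eq N r
  have : (((N+1) * N.choose r : ℕ) : ℚ) = (((N+1).choose (r+1) * (r+1) : ℕ) : ℚ) := by
    exact_mod_cast h2
  push_cast at this
  field_simp
  linarith [this]

lemma L3 (N r s : ℕ) (h : r + s = N + 1) (hs : s ≠ 0) :
    ((N+1).choose r : ℚ) = (N+1) * N.choose r / s := by
  have e1 := L1 (N+1) r s h
  have e2 := L2 N r
  rw [e2] at e1
  have hr : ((r:ℚ)+1) ≠ 0 := by positivity
  have hs' : ((s:ℚ)) ≠ 0 := by exact_mod_cast hs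
  field_simp at e1 ⊢
  linarith [e1]

set_option maxHeartbeats 4000000 in
lemma key (n m k : ℕ) (hm : 1 ≤ m) (hmn : m < n) (hk : m ≤ k) (hkn : k ≤ n) :
    ((n:ℚ) - m) * ((n:ℚ) + m + 1) *
      (Wq n m * Fq n (m+1) k - Wq n (m+1) * Fq n m k) =
    Wq n (m+1) * (Gq n m (k+1) - Gq n m k) := by
  simp only [Gq]
  obtain ⟨μ, rfl⟩ : ∃ μ, m = μ + 1 := ⟨m - 1, by omega⟩
  by_cases hB : k = n
  · subst hB
    obtain ⟨a, rfl⟩ : ∃ a, k = μ + 1 + a + 1 := ⟨k - μ - 2, by omega⟩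
    simp only [Fq, Wq]
    norm_num
    rw [show μ+1+a+1+(μ+1+1) = (μ+1+a+1+(μ+1))+1 from by omega]
    rw [L1 (μ+1+a) μ (a+1) (by omega),
        L2 (μ+1+a+1+(μ+1)) μ]
    push_cast
    have h1 : ((μ:ℚ)+1) ≠ 0 := by positivity
    have h2 : ((μ:ℚ)+1+a+1) ≠ 0 := by positivity
    have h3 : ((μ:ℚ)+1+a+1+1) ≠ 0 := by positivity
    have h5 : ((μ:ℚ)+1+1) ≠ 0 := by positivity
    field_simp
    ring
  · have hkn' : k < n := lt_of_le_of_ne hkn hB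
    by_cases hA : k = μ + 1
    · subst hA
      obtain ⟨b, rfl⟩ : ∃ b, n = μ + 1 + b + 1 := ⟨n - μ - 2, by omega⟩
      simp only [Fq, Wq]
      norm_num
      rw [show μ+1+b+1-(μ+1) = b+1 from by omega,
          show μ+1+b+1-(μ+1+1) = b from by omega,
          pow_succ]
      rw [show μ+1+b+1+(μ+1+1) = (μ+1+b+1+(μ+1))+1 from by omega]
      rw [L1 (μ+1+b) μ (b+1) (by omega),
          L2 (μ+1+b+1+(μ+1)) μ]
      push_cast
      have h1 : ((μ:ℚ)+1) ≠ 0 := by positivity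
      have h3 : ((μ:ℚ)+1+1) ≠ 0 := by positivity
      field_simp
      ring
    · obtain ⟨a, rfl⟩ : ∃ a, k = μ + 1 + a + 1 := ⟨k - μ - 2, by omega⟩
      obtain ⟨b, rfl⟩ : ∃ b, n = μ + 1 + a + 1 + b + 1 := ⟨n - μ - a - 3, by omega⟩
      simp only [Fq, Wq]
      norm_num
      rw [show μ+1+a+1+b+1-(μ+1+a+1) = b+1 from by omega,
          show μ+1+a+1+b+1-(μ+1+a+1+1) = b from by omega,
          show μ+1+a+1+b+1+(μ+1+1) = (μ+1+a+1+b+1+(μ+1))+1 from by omega,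
          show μ+1+a+1+b+1+(μ+1+a+1+1) = (μ+1+a+1+b+1+(μ+1+a+1))+1 from by omega,
          pow_succ]
      rw [L1 (μ+1+a) μ (a+1) (by omega),
          L1 (μ+1+a+1+b) (μ+1+a) (b+1) (by omega),
          L2 (μ+1+a+1+b+1+(μ+1+a+1)) (μ+1+a),
          L3 (μ+1+a) μ (a+2) (by omega) (by omega),
          L1 (μ+1+a+1+b) μ (a+b+2) (by omega),
          L2 (μ+1+a+1+b+1+(μ+1)) μ]
      push_cast
      have h1 : ((μ:ℚ)+1) ≠ 0 := by positivity
      have h2 : ((μ:ℚ)+1+a+1) ≠ 0 := by positivity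
      have h3 : ((μ:ℚ)+1+a+1+1) ≠ 0 := by positivity
      have h4 : ((a:ℚ)+2) ≠ 0 := by positivity
      have h5 : ((μ:ℚ)+1+1) ≠ 0 := by positivity
      field_simp
      ring

lemma Fq_top (n m : ℕ) (hn : 1 ≤ n) : Fq n m (n+1) = 0 := by
  simp only [Fq]
  rw [show n + 1 - 1 = n from rfl, Nat.choose_eq_zero_of_lt (show n - 1 < n by omega)]
  simp

lemma Fq_bot (n m : ℕ) (hm : 1 ≤ m) : Fq n (m+1) m = 0 := by
  simp only [Fq]
  rw [show m + 1 - 1 = m from rfl, Nat.choose_eq_zero_of_lt (show m - 1 < m by omega)]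
  simp

lemma telescope (m n : ℕ) (h : m ≤ n) (G : ℕ → ℚ) :
    ∑ k ∈ Icc m n, (G (k+1) - G k) = G (n+1) - G m := by
  rw [← Finset.Ico_add_one_right_eq_Icc, Finset.sum_Ico_eq_sum_range]
  have := Finset.sum_range_sub (fun i => G (m + i)) (n + 1 - m)
  simpa [Nat.add_sub_cancel' (by omega : m ≤ n + 1), add_assoc] using this

lemma main (n : ℕ) : ∀ j m : ℕ, 1 ≤ m → m + j = n →
    ∑ k ∈ Icc m n, Fq n m k = Wq n m := by
  intro j
  induction j with
  | zero =>
    intro m hm h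
    obtain rfl : m = n := by omega
    rw [Finset.Icc_self, Finset.sum_singleton]
    simp [Fq, Wq]
  | succ j ih =>
    intro m hm h
    have hmn : m < n := by omega
    have ihm : ∑ k ∈ Icc (m+1) n, Fq n (m+1) k = Wq n (m+1) :=
      ih (m+1) (by omega) (by omega)
    have hS' : ∑ k ∈ Icc m n, Fq n (m+1) k = Wq n (m+1) := by
      rw [Finset.Icc_eq_cons_Ioc (by omega : m ≤ n), Finset.sum_cons,
          Fq_bot n m hm, zero_add, ← Finset.Icc_add_one_left_eq_Ioc, ihm]
    have hsum : ∑ k ∈ Icc m n,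
        ((n:ℚ) - m) * ((n:ℚ) + m + 1) * (Wq n m * Fq n (m+1) k - Wq n (m+1) * Fq n m k)
        = ∑ k ∈ Icc m n, Wq n (m+1) * (Gq n m (k+1) - Gq n m k) := by
      refine Finset.sum_congr rfl fun k hk => ?_
      rw [Finset.mem_Icc] at hk
      exact key n m k hm hmn hk.1 hk.2
    rw [← Finset.mul_sum, ← Finset.mul_sum, telescope m n (by omega) (Gq n m)] at hsum
    have hGtop : Gq n m (n+1) = 0 := by
      simp [Gq, Fq_top n m (by omega)]
    have hGbot : Gq n m m = 0 := by simp [Gq]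
    rw [hGtop, hGbot, Finset.sum_sub_distrib, ← Finset.mul_sum, ← Finset.mul_sum,
        hS'] at hsum
    rw [sub_self, mul_zero] at hsum
    have hD : ((n:ℚ) - m) * ((n:ℚ) + m + 1) ≠ 0 := by
      have hc : (m:ℚ) < n := by exact_mod_cast hmn
      have h1 : ((n:ℚ) - m) ≠ 0 := by linarith
      have h2 : ((n:ℚ) + m + 1) ≠ 0 := by positivity
      exact mul_ne_zero h1 h2
    have hW : Wq n (m+1) ≠ 0 := by
      simp only [Wq, Nat.add_sub_cancel]
      have c1 : (0:ℚ) < (n-1).choose m := by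
        exact_mod_cast Nat.choose_pos (show m ≤ n - 1 by omega)
      have c2 : (0:ℚ) < (n+(m+1)).choose m := by
        exact_mod_cast Nat.choose_pos (show m ≤ n + (m+1) by omega)
      positivity
    have h0 : Wq n m * Wq n (m+1) - Wq n (m+1) * (∑ k ∈ Icc m n, Fq n m k) = 0 := by
      rcases _root_.mul_eq_zero.mp (by linarith [hsum] : ((n:ℚ) - m) * ((n:ℚ) + m + 1) *
        (Wq n m * Wq n (m+1) - Wq n (m+1) * (∑ k ∈ Icc m n, Fq n m k)) = 0) with h | h
      · exact absurd h hD
      · exact h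
    have h1 : Wq n (m+1) * (Wq n m - ∑ k ∈ Icc m n, Fq n m k) = 0 := by
      linear_combination h0
    rcases _root_.mul_eq_zero.mp h1 with h | h
    · exact absurd h hW
    · linarith [h]

theorem w_alternating_sum (m n : ℕ) (hm : 1 ≤ m) (hmn : m ≤ n) :
    ∑ k ∈ Icc m n, (-1 : ℚ) ^ (n - k) * ((k - 1).choose (m - 1) : ℚ) *
        (((n - 1).choose (k - 1) : ℚ) * ((n + k).choose (k - 1) : ℚ) / (k : ℚ)) =
    ((n - 1).choose (m - 1) : ℚ) * ((n + m).choose (m - 1) : ℚ) / (m : ℚ) := by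
  exact main n (n - m) m hm (by omega)
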